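/- Let C be a right Hopf-Galois co-object over a Hopf algebra H with cotranslation map τ = (ε⊗id)∘can⁻¹. Then for all a,b ∈ C and h ∈ H: ε(τ(a⊗b)) = ε(a)ε(b); Σ τ(a₁⊗a₂) = ε(a)1_H; τ(a ⊗ b·h) = τ(a⊗b)h; and Σ a₁·τ(a₂⊗b) = ε(a)b. -/

import Mathlib

open Coalgebra TensorProduct

universe u v w

/-- The canonical map `C ⊗ H → C ⊗ C`, `c ⊗ h ↦ Σ c₁ ⊗ c₂·h`, for a right action
`act` of `H` on `C`. -/
noncomputable def canMap {F : Type u} {C : Type v} {H : Type w} [Field F]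
    [AddCommGroup C] [Module F C] [Coalgebra F C] [AddCommGroup H] [Module F H]
    (act : C →ₗ[F] H →ₗ[F] C) : C ⊗[F] H →ₗ[F] C ⊗[F] C :=
  (LinearMap.lTensor C (TensorProduct.lift act)) ∘ₗ
    (TensorProduct.assoc F C C H).toLinearMap ∘ₗ
    (LinearMap.rTensor H (comul (R := F)))

/-- The cotranslation map `τ = (ε ⊗ id) ∘ can⁻¹ : C ⊗ C → H`, where `inv` is the
inverse of the canonical map. -/
noncomputable def cotr {F : Type u} {C : Type v} {H : Type w} [Field F]
    [AddCommGroup C] [Module F C] [Coalgebra F C] [AddCommGroup H] [Module F H]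
    (inv : C ⊗[F] C →ₗ[F] C ⊗[F] H) : C ⊗[F] C →ₗ[F] H :=
  (TensorProduct.lid F H).toLinearMap ∘ₗ (LinearMap.rTensor H (counit (R := F))) ∘ₗ inv

section aux

variable {F : Type u} {C : Type v} {H : Type w} [Field F]
    [AddCommGroup C] [Module F C] [Coalgebra F C]

lemma my_counit_smul_sum {c : C} {ι : Type*} (rc : Coalgebra.Repr F c ι) :
    ∑ i ∈ rc.index, counit (R := F) (rc.left i) • rc.right i = c := by
  have h := Coalgebra.sum_counit_tmul_eq rc
  have h2 := congrArg (TensorProduct.lid F C) h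
  rw [map_sum] at h2
  simpa using h2

lemma my_smul_counit_sum {c : C} {ι : Type*} (rc : Coalgebra.Repr F c ι) :
    ∑ i ∈ rc.index, counit (R := F) (rc.right i) • rc.left i = c := by
  have h := Coalgebra.sum_tmul_counit_eq rc
  have h2 := congrArg (TensorProduct.rid F C) h
  rw [map_sum] at h2
  simpa using h2

lemma canMap_tmul [AddCommGroup H] [Module F H] (act : C →ₗ[F] H →ₗ[F] C)
    (c : C) (h : H) {ι : Type*} (rc : Coalgebra.Repr F c ι) :
    canMap act (c ⊗ₜ[F] h) = ∑ i ∈ rc.index, rc.left i ⊗ₜ[F] act (rc.right i) h := by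
  simp only [canMap, LinearMap.comp_apply, LinearMap.rTensor_tmul, LinearEquiv.coe_coe]
  rw [← rc.eq]
  simp [TensorProduct.sum_tmul, map_sum]

end aux

/-- Basic properties of the cotranslation map `τ` of a right Hopf-Galois co-object:
`ε(τ(a⊗b)) = ε(a)ε(b)`, `Σ τ(a₁⊗a₂) = ε(a)1`, `τ(a ⊗ b·h) = τ(a⊗b)h` and
`Σ a₁·τ(a₂⊗b) = ε(a)b`. -/
theorem cotr_props {F : Type u} {C : Type v} {H : Type w} [Field F]
    [AddCommGroup C] [Module F C] [Coalgebra F C] [Ring H] [HopfAlgebra F H]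
    (act : C →ₗ[F] H →ₗ[F] C)
    (hact_one : ∀ c : C, act c 1 = c)
    (hact_mul : ∀ (c : C) (h k : H), act (act c h) k = act c (h * k))
    (hact_comul : ∀ (c : C) (h : H) (ιc : Type v) (rc : Coalgebra.Repr F c ιc)
      (ιh : Type w) (rh : Coalgebra.Repr F h ιh),
      comul (R := F) (act c h) = ∑ i ∈ rc.index, ∑ j ∈ rh.index,
        act (rc.left i) (rh.left j) ⊗ₜ[F] act (rc.right i) (rh.right j))
    (hact_counit : ∀ (c : C) (h : H),
      counit (R := F) (act c h) = counit (R := F) c * counit (R := F) h)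
    (hker : LinearMap.ker (counit (R := F) : C →ₗ[F] F) =
      Submodule.span F {x : C | ∃ (c : C) (h : H), x = act c h - counit (R := F) h • c})
    (inv : C ⊗[F] C →ₗ[F] C ⊗[F] H)
    (hinv₁ : canMap act ∘ₗ inv = LinearMap.id)
    (hinv₂ : inv ∘ₗ canMap act = LinearMap.id)
    :
    (∀ a b : C, counit (R := F) (cotr inv (a ⊗ₜ[F] b)) = counit (R := F) a * counit (R := F) b) ∧
    (∀ (a : C) (ιa : Type v) (ra : Coalgebra.Repr F a ιa),
      ∑ i ∈ ra.index, cotr inv (ra.left i ⊗ₜ[F] ra.right i) = counit (R := F) a • (1 : H)) ∧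
    (∀ (a b : C) (h : H), cotr inv (a ⊗ₜ[F] act b h) = cotr inv (a ⊗ₜ[F] b) * h) ∧
    (∀ (a b : C) (ιa : Type v) (ra : Coalgebra.Repr F a ιa),
      ∑ i ∈ ra.index, act (ra.left i) (cotr inv (ra.right i ⊗ₜ[F] b))
        = counit (R := F) a • b) := by
  -- the fundamental identity: τ ∘ can = ε ⊗ id
  have key : ∀ (c : C) (h : H),
      cotr inv (canMap act (c ⊗ₜ[F] h)) = counit (R := F) c • h := by
    intro c h
    have hx : inv (canMap act (c ⊗ₜ[F] h)) = c ⊗ₜ[F] h := by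
      have := LinearMap.congr_fun hinv₂ (c ⊗ₜ[F] h)
      simpa using this
    simp only [cotr, LinearMap.comp_apply, hx, LinearMap.rTensor_tmul,
      LinearEquiv.coe_coe, TensorProduct.lid_tmul]
  have hcan : ∀ x : C ⊗[F] C, canMap act (inv x) = x := fun x => by
    simpa using LinearMap.congr_fun hinv₁ x
  refine ⟨?_, ?_, ?_, ?_⟩
  · -- claim 1
    intro a b
    have key1 : ∀ x : C ⊗[F] H, counit (R := F) (cotr inv (canMap act x)) =
        (LinearMap.mul' F F)
          (TensorProduct.map (counit (R := F)) (counit (R := F)) (canMap act x)) := by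
      intro x
      induction x using TensorProduct.induction_on with
      | zero => simp
      | tmul c h =>
          have hc : ∑ i ∈ (ℛ F c).index,
              counit (R := F) ((ℛ F c).left i) * counit (R := F) ((ℛ F c).right i)
              = counit (R := F) c := by
            have := congrArg (counit (R := F)) (my_counit_smul_sum (ℛ F c))
            simpa [map_sum, smul_eq_mul] using this
          calc counit (R := F) (cotr inv (canMap act (c ⊗ₜ[F] h)))
              = counit (R := F) c * counit (R := F) h := by
                rw [key c h, map_smul, smul_eq_mul]
            _ = (∑ i ∈ (ℛ F c).index, counit (R := F) ((ℛ F c).left i) *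
                  counit (R := F) ((ℛ F c).right i)) * counit (R := F) h := by rw [hc]
            _ = ∑ i ∈ (ℛ F c).index, (LinearMap.mul' F F)
                  (TensorProduct.map (counit (R := F)) (counit (R := F))
                    ((ℛ F c).left i ⊗ₜ[F] act ((ℛ F c).right i) h)) := by
                rw [Finset.sum_mul]
                refine Finset.sum_congr rfl fun i _ => ?_
                simp [hact_counit, mul_assoc]
            _ = (LinearMap.mul' F F)
                  (TensorProduct.map (counit (R := F)) (counit (R := F))
                    (canMap act (c ⊗ₜ[F] h))) := by
                rw [canMap_tmul act c h (ℛ F c), map_sum, map_sum]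
      | add x y hx hy => simp only [map_add, hx, hy]
    have := key1 (inv (a ⊗ₜ[F] b))
    rw [hcan] at this
    simpa using this
  · -- claim 2
    intro a ιa ra
    have h1 : canMap act (a ⊗ₜ[F] (1 : H)) =
        ∑ i ∈ ra.index, ra.left i ⊗ₜ[F] ra.right i := by
      rw [canMap_tmul act a 1 ra]
      simp [hact_one]
    calc ∑ i ∈ ra.index, cotr inv (ra.left i ⊗ₜ[F] ra.right i)
        = cotr inv (∑ i ∈ ra.index, ra.left i ⊗ₜ[F] ra.right i) := (map_sum _ _ _).symm
      _ = cotr inv (canMap act (a ⊗ₜ[F] (1 : H))) := by rw [h1]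
      _ = counit (R := F) a • (1 : H) := key a 1
  · -- claim 3
    intro a b h
    have key3 : ∀ x : C ⊗[F] H,
        cotr inv (LinearMap.lTensor C (act.flip h) (canMap act x)) =
          cotr inv (canMap act x) * h := by
      intro x
      induction x using TensorProduct.induction_on with
      | zero => simp
      | tmul c k =>
          have h1 : LinearMap.lTensor C (act.flip h) (canMap act (c ⊗ₜ[F] k))
              = canMap act (c ⊗ₜ[F] (k * h)) := by
            rw [canMap_tmul act c k (ℛ F c), canMap_tmul act c (k * h) (ℛ F c), map_sum]
            simp [hact_mul]
          rw [h1, key, key, smul_mul_assoc]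
      | add x y hx hy => simp only [map_add, hx, hy, add_mul]
    have := key3 (inv (a ⊗ₜ[F] b))
    rw [hcan] at this
    simpa using this
  · -- claim 4
    intro a b ιa ra
    set Ψ : C ⊗[F] C →ₗ[F] C :=
      (TensorProduct.lift act) ∘ₗ (LinearMap.lTensor C (cotr inv)) ∘ₗ
        (TensorProduct.assoc F C C C).toLinearMap ∘ₗ
        (LinearMap.rTensor C (comul (R := F))) with hΨ
    have Ψ_tmul : ∀ (x y : C) {ι : Type v} (rx : Coalgebra.Repr F x ι),
        Ψ (x ⊗ₜ[F] y) = ∑ i ∈ rx.index,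
          act (rx.left i) (cotr inv (rx.right i ⊗ₜ[F] y)) := by
      intro x y _ rx
      simp only [hΨ, LinearMap.comp_apply, LinearMap.rTensor_tmul, LinearEquiv.coe_coe]
      rw [← rx.eq]
      simp [TensorProduct.sum_tmul, map_sum]
    have key4 : ∀ x : C ⊗[F] H, Ψ (canMap act x) =
        (TensorProduct.lid F C) (LinearMap.rTensor C (counit (R := F)) (canMap act x)) := by
      intro x
      induction x using TensorProduct.induction_on with
      | zero => simp
      | tmul c h =>
          set rc := ℛ F c with hrc
          -- RHS = act c h
          have hrhs : (TensorProduct.lid F C)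
              (LinearMap.rTensor C (counit (R := F)) (canMap act (c ⊗ₜ[F] h)))
              = act c h := by
            rw [canMap_tmul act c h rc, map_sum, map_sum]
            calc ∑ i ∈ rc.index, (TensorProduct.lid F C)
                  (LinearMap.rTensor C (counit (R := F))
                    (rc.left i ⊗ₜ[F] act (rc.right i) h))
                = ∑ i ∈ rc.index, act (counit (R := F) (rc.left i) • rc.right i) h := by
                  refine Finset.sum_congr rfl fun i _ => ?_
                  simp
              _ = act (∑ i ∈ rc.index, counit (R := F) (rc.left i) • rc.right i) h := by
                  rw [map_sum, LinearMap.sum_apply]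
              _ = act c h := by rw [my_counit_smul_sum rc]
          rw [hrhs]
          -- LHS
          rw [canMap_tmul act c h rc, map_sum]
          rw [Finset.sum_congr rfl
            (fun i _ => Ψ_tmul (rc.left i) (act (rc.right i) h) (ℛ F (rc.left i)))]
          -- use coassociativity
          have H3 := Coalgebra.sum_tmul_tmul_eq rc
            (fun i => ℛ F (rc.left i)) (fun i => ℛ F (rc.right i))
          set Φ : C ⊗[F] (C ⊗[F] C) →ₗ[F] C :=
            (TensorProduct.lift act) ∘ₗ
              (LinearMap.lTensor C ((cotr inv) ∘ₗ (LinearMap.lTensor C (act.flip h)))) with hΦ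
          have HΦ := congrArg Φ H3
          rw [map_sum, map_sum] at HΦ
          simp only [map_sum] at HΦ
          have Φ_tmul : ∀ x y z : C, Φ (x ⊗ₜ[F] (y ⊗ₜ[F] z))
              = act x (cotr inv (y ⊗ₜ[F] act z h)) := by
            intro x y z
            simp [hΦ]
          simp only [Φ_tmul] at HΦ
          rw [HΦ]
          -- now simplify the RHS of HΦ
          calc ∑ i ∈ rc.index, ∑ j ∈ (ℛ F (rc.right i)).index,
                act (rc.left i) (cotr inv ((ℛ F (rc.right i)).left j ⊗ₜ[F]
                  act ((ℛ F (rc.right i)).right j) h))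
              = ∑ i ∈ rc.index, act (rc.left i)
                  (cotr inv (canMap act (rc.right i ⊗ₜ[F] h))) := by
                refine Finset.sum_congr rfl fun i _ => ?_
                rw [canMap_tmul act (rc.right i) h (ℛ F (rc.right i)), map_sum, map_sum]
            _ = ∑ i ∈ rc.index, counit (R := F) (rc.right i) • act (rc.left i) h := by
                refine Finset.sum_congr rfl fun i _ => ?_
                rw [key]
                simp
            _ = ∑ i ∈ rc.index, act (counit (R := F) (rc.right i) • rc.left i) h := by
                refine Finset.sum_congr rfl fun i _ => ?_
                rw [map_smul, LinearMap.smul_apply]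
            _ = act (∑ i ∈ rc.index, counit (R := F) (rc.right i) • rc.left i) h := by
                rw [map_sum, LinearMap.sum_apply]
            _ = act c h := by rw [my_smul_counit_sum rc]
      | add x y hx hy => simp only [map_add, hx, hy]
    have h1 : ∑ i ∈ ra.index, act (ra.left i) (cotr inv (ra.right i ⊗ₜ[F] b))
        = Ψ (a ⊗ₜ[F] b) := (Ψ_tmul a b ra).symm
    rw [h1, ← hcan (a ⊗ₜ[F] b), key4, hcan]
    simp
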